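/- Fix q > 1 and y > 0. If 1 < p₁ < p₂ and x₁, x₂ ∈ (0,1) satisfy ∫_0^{x₁} (1-t^q)^{-(1+1/q-1/p₁)} dt = y and ∫_0^{x₂} (1-t^q)^{-(1+1/q-1/p₂)} dt = y, then x₂ < x₁. In other words, the function p ↦ tamh_{p,q}(y) is decreasing on (1,∞). -/
import Mathlib

open MeasureTheory

lemma tamh_cont (q c : ℝ) (hq : 1 < q) (b : ℝ) (hb : b < 1) :
    ContinuousOn (fun t : ℝ => (1 - t ^ q) ^ c) (Set.Icc 0 b) := by
  intro t ht
  have ht0 : 0 ≤ t := ht.1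
  have htq : t ^ q < 1 := by
    calc t ^ q ≤ b ^ q := Real.rpow_le_rpow ht0 ht.2 (by linarith)
    _ < 1 := Real.rpow_lt_one (le_trans ht0 ht.2) hb (by linarith)
  have hpos : 0 < 1 - t ^ q := by linarith
  apply ContinuousWithinAt.rpow_const
  · exact (continuousWithinAt_const.sub ((Real.continuousAt_rpow_const t q
      (Or.inr (by linarith))).continuousWithinAt))
  · left; exact ne_of_gt hpos

theorem tamh_pq_decreasing_in_p (q y : ℝ) (hq : 1 < q) (hy : 0 < y)
    (p₁ p₂ x₁ x₂ : ℝ) (hp₁ : 1 < p₁) (hp : p₁ < p₂)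
    (hx₁ : x₁ ∈ Set.Ioo (0:ℝ) 1) (hx₂ : x₂ ∈ Set.Ioo (0:ℝ) 1)
    (h₁ : (∫ t in (0:ℝ)..x₁, (1 - t ^ q) ^ (-(1 + 1 / q - 1 / p₁))) = y)
    (h₂ : (∫ t in (0:ℝ)..x₂, (1 - t ^ q) ^ (-(1 + 1 / q - 1 / p₂))) = y) :
    x₂ < x₁ := by
  by_contra hcon
  push_neg at hcon
  -- hcon : x₁ ≤ x₂
  have hq0 : 0 < q := by linarith
  have hcont₁ := tamh_cont q (-(1 + 1 / q - 1 / p₁)) hq x₂ hx₂.2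
  have hcont₂ := tamh_cont q (-(1 + 1 / q - 1 / p₂)) hq x₂ hx₂.2
  have hexp : -(1 + 1 / q - 1 / p₂) < -(1 + 1 / q - 1 / p₁) := by
    have : 1 / p₂ < 1 / p₁ := one_div_lt_one_div_of_lt (by linarith) hp
    linarith
  have hbase : ∀ t ∈ Set.Ioc (0:ℝ) x₂, 0 < 1 - t ^ q ∧ t ^ q > 0 ∧ 1 - t ^ q < 1 := by
    intro t ht
    have ht0 : 0 < t := ht.1
    have htq : t ^ q < 1 := by
      calc t ^ q ≤ x₂ ^ q := Real.rpow_le_rpow ht0.le ht.2 hq0.le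
      _ < 1 := Real.rpow_lt_one hx₂.1.le hx₂.2 hq0
    exact ⟨by linarith, Real.rpow_pos_of_pos ht0 q, by
      have := Real.rpow_pos_of_pos ht0 q; linarith⟩
  have key : (∫ t in (0:ℝ)..x₂, (1 - t ^ q) ^ (-(1 + 1 / q - 1 / p₁)))
      < ∫ t in (0:ℝ)..x₂, (1 - t ^ q) ^ (-(1 + 1 / q - 1 / p₂)) := by
    apply intervalIntegral.integral_lt_integral_of_continuousOn_of_le_of_exists_lt hx₂.1
      hcont₁ hcont₂
    · intro t ht
      obtain ⟨h1, h2, h3⟩ := hbase t ht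
      exact (Real.rpow_lt_rpow_of_exponent_gt h1 h3 hexp).le
    · refine ⟨x₂, Set.right_mem_Icc.2 hx₂.1.le, ?_⟩
      obtain ⟨h1, h2, h3⟩ := hbase x₂ ⟨hx₂.1, le_refl _⟩
      exact Real.rpow_lt_rpow_of_exponent_gt h1 h3 hexp
  have mono : (∫ t in (0:ℝ)..x₁, (1 - t ^ q) ^ (-(1 + 1 / q - 1 / p₁)))
      ≤ ∫ t in (0:ℝ)..x₂, (1 - t ^ q) ^ (-(1 + 1 / q - 1 / p₁)) := by
    apply intervalIntegral.integral_mono_interval le_rfl hx₁.1.le hcon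
    · rw [Filter.EventuallyLE, MeasureTheory.ae_restrict_iff' measurableSet_Ioc]
      filter_upwards with t ht
      exact Real.rpow_nonneg (hbase t ht).1.le _
    · exact hcont₁.intervalIntegrable_of_Icc hx₂.1.le
  rw [h₁] at mono
  rw [h₂] at key
  linarith
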